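/- Let X be a topological space and let P be a property of subsets of X such that: the empty set has P; whenever B ⊆ X has P, A ⊆ B, and A is closed in X, then A has P; and whenever A and B are closed subsets of X both having P, then A ∪ B has P, so that 𝓗_P(X) = {H ⊆ X : cl_X H has P} is an ideal in X. Then the following are equivalent: (1) X is connected modulo 𝓗_P(X); (2) there is no pair C, D of disjoint cozero-sets of X such that neither cl_X C nor cl_X D has P, and X \ (C ∪ D) is contained in a cozero-set E of X such that cl_X E has P. -/

import Mathlib

open Set Topology

/-- An ideal in a set `X`: a nonempty collection of subsets of `X`, downward closed
and closed under finite unions. -/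
def IsSetIdeal {X : Type*} (H : Set (Set X)) : Prop :=
  H.Nonempty ∧ (∀ A B : Set X, A ⊆ B → B ∈ H → A ∈ H) ∧
    (∀ A B : Set X, A ∈ H → B ∈ H → A ∪ B ∈ H)

/-- A continuous map `f : X → [0,1]` is 2-valued modulo an ideal `H` if `f⁻¹(0) ∉ H`,
`f⁻¹(1) ∉ H`, and `X \ (f⁻¹(0) ∪ f⁻¹(1)) ∈ H`. -/
def TwoValuedMod {X : Type*} [TopologicalSpace X] (H : Set (Set X)) (f : X → ℝ) : Prop :=
  Continuous f ∧ (∀ x, f x ∈ Set.Icc (0 : ℝ) 1) ∧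
    f ⁻¹' {0} ∉ H ∧ f ⁻¹' {1} ∉ H ∧ (f ⁻¹' {0} ∪ f ⁻¹' {1})ᶜ ∈ H

/-- `X` is connected modulo the ideal `H` if there is no continuous `f : X → [0,1]`
that is 2-valued modulo `H`. -/
def ConnectedMod (X : Type*) [TopologicalSpace X] (H : Set (Set X)) : Prop :=
  ¬ ∃ f : X → ℝ, TwoValuedMod H f

/-- A cozero-set in `X`: a set of the form `{x : f x ≠ 0}` for a continuous
`f : X → [0,1]`. -/
def IsCozeroSet {X : Type*} [TopologicalSpace X] (C : Set X) : Prop :=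
  ∃ f : X → ℝ, Continuous f ∧ (∀ x, f x ∈ Set.Icc (0 : ℝ) 1) ∧ C = {x | f x ≠ 0}

theorem connectedMod_property_iff_no_cozero_separation {X : Type*} [TopologicalSpace X]
    (P : Set X → Prop)
    (hP0 : P ∅)
    (hPher : ∀ A B : Set X, A ⊆ B → IsClosed A → P B → P A)
    (hPun : ∀ A B : Set X, IsClosed A → IsClosed B → P A → P B → P (A ∪ B)) :
    ConnectedMod X {H : Set X | P (closure H)} ↔
      ¬ ∃ C D : Set X, IsCozeroSet C ∧ IsCozeroSet D ∧ Disjoint C D ∧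
        ¬ P (closure C) ∧ ¬ P (closure D) ∧
        ∃ E : Set X, IsCozeroSet E ∧ P (closure E) ∧ (C ∪ D)ᶜ ⊆ E := by
  constructor
  · -- connected mod ⇒ no separation
    intro hconn
    rintro ⟨C, D, ⟨g, hgc, hg01, hCg⟩, ⟨h, hhc, hh01, hDh⟩, hCD, hPC, hPD,
      E, ⟨e, hec, he01, hEe⟩, hPE, hsub⟩
    apply hconn
    have hgnn : ∀ x, 0 ≤ g x := fun x => (hg01 x).1
    have hhnn : ∀ x, 0 ≤ h x := fun x => (hh01 x).1
    have henn : ∀ x, 0 ≤ e x := fun x => (he01 x).1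
    have hdenpos : ∀ x, 0 < g x + h x + e x := by
      intro x
      rcases (lt_or_eq_of_le (by have := hgnn x; have := hhnn x; have := henn x; linarith :
        (0:ℝ) ≤ g x + h x + e x)) with hlt | heq
      · exact hlt
      · exfalso
        have hg0 : g x = 0 := by nlinarith [hgnn x, hhnn x, henn x]
        have hh0 : h x = 0 := by nlinarith [hgnn x, hhnn x, henn x]
        have he0 : e x = 0 := by nlinarith [hgnn x, hhnn x, henn x]
        have hxE : x ∈ E := by
          apply hsub
          intro hx
          rcases hx with hx | hx
          · rw [hCg] at hx; exact hx hg0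
          · rw [hDh] at hx; exact hx hh0
        rw [hEe] at hxE
        exact hxE he0
    have hdenne : ∀ x, g x + h x + e x ≠ 0 := fun x => (hdenpos x).ne'
    refine ⟨fun x => h x / (g x + h x + e x), ?_, ?_, ?_, ?_, ?_⟩
    · exact hhc.div ((hgc.add hhc).add hec) hdenne
    · intro x
      constructor
      · exact div_nonneg (hhnn x) (hdenpos x).le
      · rw [div_le_one (hdenpos x)]
        have := hgnn x; have := henn x; linarith
    · -- f⁻¹{0} ∉ H
      intro hmem
      apply hPC
      refine hPher _ _ (closure_mono ?_) isClosed_closure hmem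
      intro x hx
      simp only [mem_preimage, mem_singleton_iff]
      have hxD : x ∉ D := fun hxD => (hCD.ne_of_mem hx hxD) rfl
      rw [hDh] at hxD
      simp only [mem_setOf_eq, not_not] at hxD
      rw [hxD]; exact zero_div _
    · -- f⁻¹{1} ∉ H
      intro hmem
      apply hPD
      have hDsub : D ⊆ (fun x => h x / (g x + h x + e x)) ⁻¹' {1} ∪ E := by
        intro x hxD
        by_cases hxE : x ∈ E
        · exact Or.inr hxE
        · left
          have hxC : x ∉ C := fun hxC => (hCD.ne_of_mem hxC hxD) rfl
          rw [hCg] at hxC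
          simp only [mem_setOf_eq, not_not] at hxC
          rw [hEe] at hxE
          simp only [mem_setOf_eq, not_not] at hxE
          simp only [mem_preimage, mem_singleton_iff]
          rw [div_eq_one_iff_eq (hdenne x), hxC, hxE]
          ring
      have hcl : closure D ⊆ closure ((fun x => h x / (g x + h x + e x)) ⁻¹' {1}) ∪ closure E := by
        refine (closure_mono hDsub).trans ?_
        rw [closure_union]
      exact hPher _ _ hcl isClosed_closure
        (hPun _ _ isClosed_closure isClosed_closure hmem hPE)
    · -- middle in H
      show P _
      refine hPher _ _ (closure_mono ?_) isClosed_closure hPE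
      intro x hx
      simp only [mem_compl_iff, mem_union, mem_preimage, mem_singleton_iff, not_or] at hx
      obtain ⟨hx0, hx1⟩ := hx
      have hh0 : h x ≠ 0 := by
        intro h0
        exact hx0 (by rw [h0, zero_div])
      have hxD : x ∈ D := by rw [hDh]; exact hh0
      rw [hEe]
      intro he0
      apply hx1
      have hxC : x ∉ C := fun hxC => (hCD.ne_of_mem hxC hxD) rfl
      rw [hCg] at hxC
      simp only [mem_setOf_eq, not_not] at hxC
      rw [div_eq_one_iff_eq (hdenne x), hxC, he0]
      ring
  · -- no separation ⇒ connected mod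
    intro hsep
    rintro ⟨f, hfc, hf01, h0, h1, hmid⟩
    apply hsep
    refine ⟨{x | max (1 - 3 * f x) 0 ≠ 0}, {x | max (3 * f x - 2) 0 ≠ 0},
      ⟨_, (continuous_const.sub (continuous_const.mul hfc)).max continuous_const, ?_, rfl⟩,
      ⟨_, ((continuous_const.mul hfc).sub continuous_const).max continuous_const, ?_, rfl⟩,
      ?_, ?_, ?_,
      {x | 4 * f x * (1 - f x) ≠ 0},
      ⟨_, (continuous_const.mul hfc).mul (continuous_const.sub hfc), ?_, rfl⟩, ?_, ?_⟩
    · intro x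
      have := (hf01 x).1; have := (hf01 x).2
      constructor
      · exact le_max_right _ _
      · refine max_le ?_ (by linarith)
        simp only [Pi.sub_apply, Pi.mul_apply]
        linarith
    · intro x
      have := (hf01 x).1; have := (hf01 x).2
      constructor
      · exact le_max_right _ _
      · refine max_le ?_ (by linarith)
        simp only [Pi.sub_apply, Pi.mul_apply]
        linarith
    · -- disjoint
      rw [Set.disjoint_left]
      intro x hx hx'
      simp only [mem_setOf_eq] at hx hx'
      have h1 : 1 - 3 * f x > 0 := by
        rcases lt_or_ge 0 (1 - 3 * f x) with hlt | hle
        · exact hlt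
        · exact absurd (max_eq_right hle) hx
      have h2 : 3 * f x - 2 > 0 := by
        rcases lt_or_ge 0 (3 * f x - 2) with hlt | hle
        · exact hlt
        · exact absurd (max_eq_right hle) hx'
      linarith
    · -- ¬ P (closure C)
      intro hPC
      apply h0
      show P _
      refine hPher _ _ (closure_mono ?_) isClosed_closure hPC
      intro x hx
      simp only [mem_preimage, mem_singleton_iff] at hx
      simp only [mem_setOf_eq, hx]
      norm_num
    · -- ¬ P (closure D)
      intro hPD
      apply h1
      show P _
      refine hPher _ _ (closure_mono ?_) isClosed_closure hPD
      intro x hx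
      simp only [mem_preimage, mem_singleton_iff] at hx
      simp only [mem_setOf_eq, hx]
      norm_num
    · intro x
      have h0 := (hf01 x).1; have h1 := (hf01 x).2
      constructor
      · simp only [Pi.mul_apply, Pi.sub_apply]; nlinarith [mul_nonneg h0 (by linarith : (0:ℝ) ≤ 1 - f x)]
      · simp only [Pi.mul_apply, Pi.sub_apply]; nlinarith [sq_nonneg (2 * f x - 1)]
    · -- P (closure E)
      refine hPher _ _ (closure_mono ?_) isClosed_closure hmid
      intro x hx
      simp only [mem_setOf_eq] at hx
      simp only [mem_compl_iff, mem_union, mem_preimage, mem_singleton_iff, not_or]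
      constructor
      · intro hf0; apply hx; rw [hf0]; ring
      · intro hf1; apply hx; rw [hf1]; ring
    · -- (C ∪ D)ᶜ ⊆ E
      intro x hx
      simp only [mem_compl_iff, mem_union, mem_setOf_eq, not_or, not_not] at hx
      obtain ⟨hg0, hh0⟩ := hx
      have hge : 1 - 3 * f x ≤ 0 := by
        by_contra hc
        push_neg at hc
        rw [max_eq_left (le_of_lt hc)] at hg0
        linarith
      have hle : 3 * f x - 2 ≤ 0 := by
        by_contra hc
        push_neg at hc
        rw [max_eq_left (le_of_lt hc)] at hh0
        linarith
      simp only [mem_setOf_eq]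
      intro hcontra
      nlinarith
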